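/- arXiv:1407.1015 — 2 statements merged into one kernel-verified Lean document; each statement's English description precedes it below -/
import Mathlib

section
/- Let (A,h) be an algebraic model, W the set of prime filters of A ordered by inclusion, sᵢ(P) = {x ∈ A : Sᵢx ∈ P}, and for P ∈ W define M,P sat α by the canonical model clauses with M,P sat p iff h(p) ∈ P for propositional variables p. Then for all formulas α,β and prime filters P,Q: (1) if M,P sat α and P ⊆ Q then M,Q sat α; (2) M,P sat (α∧β) iff M,P sat α and M,P sat β; (3) M,P sat (α∨β) iff M,P sat α or M,P sat β; (4) M,P sat (α⇒β) iff for every prime filter Q with P ⊆ Q, M,Q sat α implies M,Q sat β; (5) M,P sat ¬α iff for every prime filter Q with P ⊆ Q, not M,Q sat α; (6) M,P sat Sᵢα iff M,sᵢ(P) sat α. Equivalently, for every formula α and prime filter P: M,P sat α iff h(α) ∈ P. -/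
/-- A HT-algebra: a Heyting algebra with unary operations `S 0` (= S₁), `S 1` (= S₂)
satisfying (HT2)–(HT7).  (Note: in a Heyting algebra, ¬a = a ⇨ ⊥ = aᶜ.) -/
structure HTAlgebra (A : Type*) [HeytingAlgebra A] where
  S : Fin 2 → A → A
  /-- (HT2) each Sᵢ preserves ∧ -/
  S_inf : ∀ i a b, S i (a ⊓ b) = S i a ⊓ S i b
  /-- (HT2) each Sᵢ preserves ∨ -/
  S_sup : ∀ i a b, S i (a ⊔ b) = S i a ⊔ S i b
  /-- (HT3) S₂(a ⇒ b) = S₂a ⇒ S₂b -/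
  S2_himp : ∀ a b, S 1 (a ⇨ b) = S 1 a ⇨ S 1 b
  /-- (HT4) S₁(a ⇒ b) = (S₁a ⇒ S₁b) ∧ (S₂a ⇒ S₂b) -/
  S1_himp : ∀ a b, S 0 (a ⇨ b) = (S 0 a ⇨ S 0 b) ⊓ (S 1 a ⇨ S 1 b)
  /-- (HT5) SᵢSⱼa = Sⱼa -/
  S_S : ∀ i j a, S i (S j a) = S j a
  /-- (HT6) S₁a ∨ a = a -/
  S1_sup_self : ∀ a, S 0 a ⊔ a = a
  /-- (HT7) S₁a ∨ ¬S₁a = 1 -/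
  S1_lem : ∀ a, S 0 a ⊔ (S 0 a)ᶜ = ⊤

/-- Formulas: propositional variables (indexed by ℕ) combined with
∧, ∨, ⇒, ¬ and the unary connectives S₁ (= S 0), S₂ (= S 1). -/
inductive Fml : Type
  | var : ℕ → Fml
  | and : Fml → Fml → Fml
  | or : Fml → Fml → Fml
  | imp : Fml → Fml → Fml
  | neg : Fml → Fml
  | S : Fin 2 → Fml → Fml

/-- A prime filter of a lattice: a proper nonempty upward-closed subset closed
under ∧ such that a ∨ b ∈ P implies a ∈ P or b ∈ P. -/
def IsPrimeFilter {A : Type*} [Lattice A] (P : Set A) : Prop :=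
  P.Nonempty ∧ P ≠ Set.univ ∧
  (∀ a b, a ∈ P → a ≤ b → b ∈ P) ∧
  (∀ a b, a ∈ P → b ∈ P → a ⊓ b ∈ P) ∧
  (∀ a b, a ⊔ b ∈ P → a ∈ P ∨ b ∈ P)

/-- A homomorphism from formulas into a HT-algebra: a map preserving
∧, ∨, ⇒, ¬, S₁, S₂. -/
def IsHom {A : Type*} [HeytingAlgebra A] (H : HTAlgebra A) (h : Fml → A) : Prop :=
  (∀ α β, h (.and α β) = h α ⊓ h β) ∧
  (∀ α β, h (.or α β) = h α ⊔ h β) ∧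
  (∀ α β, h (.imp α β) = h α ⇨ h β) ∧
  (∀ α, h (.neg α) = (h α)ᶜ) ∧
  (∀ (i : Fin 2) α, h (.S i α) = H.S i (h α))

/-- Satisfaction at prime filters in the canonical model of an algebraic model
(A, h): the canonical clauses, with M,P sat p iff h(p) ∈ P at variables and
sᵢ(P) = {x : Sᵢx ∈ P}. -/
def PSat {A : Type*} [HeytingAlgebra A] (H : HTAlgebra A) (h : Fml → A) :
    Fml → Set A → Prop
  | .var p => fun P => h (.var p) ∈ P
  | .and α β => fun P => PSat H h α P ∧ PSat H h β P
  | .or α β => fun P => PSat H h α P ∨ PSat H h β P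
  | .imp α β => fun P =>
      ∀ Q, IsPrimeFilter Q → P ⊆ Q → PSat H h α Q → PSat H h β Q
  | .neg α => fun P => ∀ Q, IsPrimeFilter Q → P ⊆ Q → ¬ PSat H h α Q
  | .S i α => fun P => PSat H h α {x | H.S i x ∈ P}

-- auxiliary material (to be inserted above the theorem)
section Aux
variable {A : Type*} [HeytingAlgebra A]

/-- Separation: if `a ⇨ b ∉ P` for a prime filter `P`, there is a prime filter
`Q ⊇ P` with `a ∈ Q`, `b ∉ Q`. -/
theorem primeFilter_sep {P : Set A} (hP : IsPrimeFilter P)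
    (a b : A) (hab : a ⇨ b ∉ P) :
    ∃ Q : Set A, IsPrimeFilter Q ∧ P ⊆ Q ∧ a ∈ Q ∧ b ∉ Q := by
  classical
  obtain ⟨hne, -, hup, hinf, -⟩ := hP
  set G : Set A := {y | ∃ x ∈ P, x ⊓ a ≤ y} with hGdef
  have hGpf : Order.IsPFilter G := by
    apply Order.IsPFilter.of_def
    · obtain ⟨x, hx⟩ := hne
      exact ⟨x ⊓ a, x, hx, le_rfl⟩
    · rintro y ⟨x, hx, hxy⟩ z ⟨w, hw, hwz⟩
      exact ⟨y ⊓ z, ⟨x ⊓ w, hinf _ _ hx hw,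
        le_inf (((inf_le_inf_right a inf_le_left).trans hxy))
          (((inf_le_inf_right a inf_le_right).trans hwz))⟩,
        inf_le_left, inf_le_right⟩
    · rintro x y hxy ⟨w, hw, hwx⟩
      exact ⟨w, hw, hwx.trans hxy⟩
  have hdisj : Disjoint ((hGpf.toPFilter : Order.PFilter A) : Set A)
      ((Order.Ideal.principal b : Order.Ideal A) : Set A) := by
    rw [Set.disjoint_left]
    intro y hyG hyb
    rcases hyG with ⟨x, hx, hxy⟩
    exact hab (hup _ _ hx (le_himp_iff.mpr (hxy.trans hyb)))
  obtain ⟨J, hJprime, hJle, hJdisj⟩ :=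
    DistribLattice.prime_ideal_of_disjoint_filter_ideal hdisj
  refine ⟨(↑J : Set A)ᶜ, ⟨?_, ?_, ?_, ?_, ?_⟩, ?_, ?_, ?_⟩
  · obtain ⟨x, hx⟩ := Set.ne_univ_iff_exists_notMem _ |>.mp hJprime.toIsProper.ne_univ
    exact ⟨x, hx⟩
  · intro hQ
    obtain ⟨x, hx⟩ := J.nonempty
    exact (hQ ▸ Set.mem_univ x : x ∈ (↑J : Set A)ᶜ) hx
  · exact fun x y hx hxy hy => hx (J.lower hxy hy)
  · intro x y hx hy hxyJ
    rcases hJprime.mem_or_mem hxyJ with h' | h'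
    · exact hx h'
    · exact hy h'
  · intro x y hxy
    by_contra hc
    push_neg at hc
    rcases hc with ⟨hx, hy⟩
    simp only [Set.mem_compl_iff, not_not] at hx hy
    exact hxy (Order.Ideal.sup_mem hx hy)
  · exact fun x hx hxJ => (Set.disjoint_left.mp hJdisj ⟨x, hx, inf_le_left⟩) hxJ
  · obtain ⟨x, hx⟩ := hne
    exact fun haJ => (Set.disjoint_left.mp hJdisj ⟨x, hx, inf_le_right⟩) haJ
  · exact fun hbQ => hbQ (hJle (Order.Ideal.mem_principal.mpr le_rfl))

theorem HTAlgebra.S_top (H : HTAlgebra A) (i : Fin 2) : H.S i ⊤ = ⊤ := by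
  fin_cases i
  · have := H.S1_himp (⊥ : A) ⊥
    simpa [himp_self] using this
  · have := H.S2_himp (⊥ : A) ⊥
    simpa [himp_self] using this

theorem HTAlgebra.S_bot_le (H : HTAlgebra A) (i : Fin 2) (a : A) :
    H.S i ⊥ ≤ H.S i a := by
  have := H.S_inf i a ⊥
  rw [inf_bot_eq] at this
  rw [this]
  exact inf_le_left

theorem HTAlgebra.S_mono (H : HTAlgebra A) (i : Fin 2) {a b : A} (hab : a ≤ b) :
    H.S i a ≤ H.S i b := by
  have := H.S_inf i a b
  rw [inf_eq_left.mpr hab] at this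
  rw [this]
  exact inf_le_right

theorem PSat_univ (H : HTAlgebra A) (h : Fml → A) (α : Fml) :
    PSat H h α Set.univ := by
  induction α with
  | var p => exact Set.mem_univ _
  | and α β ihα ihβ => exact ⟨ihα, ihβ⟩
  | or α β ihα ihβ => exact Or.inl ihα
  | imp α β ihα ihβ =>
    intro Q hQ hsub _
    exact absurd (Set.univ_subset_iff.mp hsub) hQ.2.1
  | neg α ihα =>
    intro Q hQ hsub _
    exact hQ.2.1 (Set.univ_subset_iff.mp hsub)
  | S i α ihα =>
    show PSat H h α {x | H.S i x ∈ (Set.univ : Set A)}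
    simpa only [Set.mem_univ, Set.setOf_true] using ihα

theorem PSat_key (H : HTAlgebra A) (h : Fml → A) (hh : IsHom H h) :
    ∀ (α : Fml) (P : Set A), IsPrimeFilter P → (PSat H h α P ↔ h α ∈ P) := by
  obtain ⟨hand, hor, himp', hneg, hS⟩ := hh
  intro α
  induction α with
  | var p => exact fun P _ => Iff.rfl
  | and α β ihα ihβ =>
    intro P hP
    rw [hand]
    show PSat H h α P ∧ PSat H h β P ↔ _
    rw [ihα P hP, ihβ P hP]
    exact ⟨fun ⟨ha, hb⟩ => hP.2.2.2.1 _ _ ha hb,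
      fun hab => ⟨hP.2.2.1 _ _ hab inf_le_left, hP.2.2.1 _ _ hab inf_le_right⟩⟩
  | or α β ihα ihβ =>
    intro P hP
    rw [hor]
    show PSat H h α P ∨ PSat H h β P ↔ _
    rw [ihα P hP, ihβ P hP]
    exact ⟨fun hc => hc.elim (fun ha => hP.2.2.1 _ _ ha le_sup_left)
      (fun hb => hP.2.2.1 _ _ hb le_sup_right), hP.2.2.2.2 _ _⟩
  | imp α β ihα ihβ =>
    intro P hP
    rw [himp']
    show (∀ Q, IsPrimeFilter Q → P ⊆ Q → PSat H h α Q → PSat H h β Q) ↔ _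
    constructor
    · intro hm
      by_contra hnot
      obtain ⟨Q, hQ, hPQ, haQ, hbQ⟩ := primeFilter_sep hP (h α) (h β) hnot
      exact hbQ ((ihβ Q hQ).mp (hm Q hQ hPQ ((ihα Q hQ).mpr haQ)))
    · intro hm Q hQ hPQ hsα
      refine (ihβ Q hQ).mpr ?_
      have h1 : h α ⇨ h β ∈ Q := hPQ hm
      have h2 : h α ∈ Q := (ihα Q hQ).mp hsα
      exact hQ.2.2.1 _ _ (hQ.2.2.2.1 _ _ h1 h2) himp_inf_le
  | neg α ihα =>
    intro P hP
    rw [hneg]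
    show (∀ Q, IsPrimeFilter Q → P ⊆ Q → ¬ PSat H h α Q) ↔ _
    rw [← himp_bot]
    constructor
    · intro hm
      by_contra hnot
      obtain ⟨Q, hQ, hPQ, haQ, hbQ⟩ := primeFilter_sep hP (h α) ⊥ hnot
      exact hm Q hQ hPQ ((ihα Q hQ).mpr haQ)
    · intro hm Q hQ hPQ hsα
      have h2 : h α ∈ Q := (ihα Q hQ).mp hsα
      have hbot : (⊥ : A) ∈ Q := hQ.2.2.1 _ _ (hQ.2.2.2.1 _ _ (hPQ hm) h2) himp_inf_le
      exact hQ.2.1 (Set.eq_univ_of_forall fun x => hQ.2.2.1 _ _ hbot bot_le)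
  | S i α ihα =>
    intro P hP
    rw [hS]
    show PSat H h α {x | H.S i x ∈ P} ↔ H.S i (h α) ∈ P
    by_cases hc : H.S i ⊥ ∈ P
    · have hall : ∀ x, H.S i x ∈ P := fun x => hP.2.2.1 _ _ hc (H.S_bot_le i x)
      refine iff_of_true ?_ (hall _)
      have : {x | H.S i x ∈ P} = Set.univ := Set.eq_univ_of_forall hall
      rw [this]
      exact PSat_univ H h α
    · have htop : (⊤ : A) ∈ P := by
        obtain ⟨x, hx⟩ := hP.1
        exact hP.2.2.1 _ _ hx le_top
      have hQ : IsPrimeFilter {x | H.S i x ∈ P} := by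
        refine ⟨⟨⊤, by simp only [Set.mem_setOf_eq, H.S_top i]; exact htop⟩, ?_, ?_, ?_, ?_⟩
        · intro he
          exact hc (he ▸ Set.mem_univ ⊥ : (⊥ : A) ∈ {x | H.S i x ∈ P})
        · exact fun x y hx hxy => hP.2.2.1 _ _ hx (H.S_mono i hxy)
        · intro x y hx hy
          show H.S i (x ⊓ y) ∈ P
          rw [H.S_inf]
          exact hP.2.2.2.1 _ _ hx hy
        · intro x y hxy
          have : H.S i x ⊔ H.S i y ∈ P := by rw [← H.S_sup]; exact hxy
          exact hP.2.2.2.2 _ _ this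
      exact ihα _ hQ

end Aux

/-- Proposition 5.4: properties (1)–(6) of canonical satisfaction, and the
key equivalence: M,P sat α iff h(α) ∈ P. -/
theorem stmt_15 {A : Type*} [HeytingAlgebra A] (H : HTAlgebra A)
    (h : Fml → A) (hh : IsHom H h) :
    -- (1) heredity
    (∀ (α : Fml) (P Q : Set A), IsPrimeFilter P → IsPrimeFilter Q →
      PSat H h α P → P ⊆ Q → PSat H h α Q) ∧
    -- (2)
    (∀ (α β : Fml) (P : Set A), IsPrimeFilter P →
      (PSat H h (.and α β) P ↔ PSat H h α P ∧ PSat H h β P)) ∧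
    -- (3)
    (∀ (α β : Fml) (P : Set A), IsPrimeFilter P →
      (PSat H h (.or α β) P ↔ PSat H h α P ∨ PSat H h β P)) ∧
    -- (4)
    (∀ (α β : Fml) (P : Set A), IsPrimeFilter P →
      (PSat H h (.imp α β) P ↔
        ∀ Q, IsPrimeFilter Q → P ⊆ Q → PSat H h α Q → PSat H h β Q)) ∧
    -- (5)
    (∀ (α : Fml) (P : Set A), IsPrimeFilter P →
      (PSat H h (.neg α) P ↔ ∀ Q, IsPrimeFilter Q → P ⊆ Q → ¬ PSat H h α Q)) ∧
    -- (6)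
    (∀ (i : Fin 2) (α : Fml) (P : Set A), IsPrimeFilter P →
      (PSat H h (.S i α) P ↔ PSat H h α {x | H.S i x ∈ P})) ∧
    -- equivalently: M,P sat α iff h(α) ∈ P
    (∀ (α : Fml) (P : Set A), IsPrimeFilter P → (PSat H h α P ↔ h α ∈ P)) := by
  obtain ⟨hand, hor, himp', hneg, hS⟩ := hh
  have key := PSat_key H h ⟨hand, hor, himp', hneg, hS⟩
  refine ⟨?_, ?_, ?_, ?_, ?_, ?_, key⟩
  · exact fun α P Q hP hQ hs hsub => (key α Q hQ).mpr (hsub ((key α P hP).mp hs))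
  · exact fun α β P _ => Iff.rfl
  · exact fun α β P _ => Iff.rfl
  · exact fun α β P _ => Iff.rfl
  · exact fun α P _ => Iff.rfl
  · exact fun i α P _ => Iff.rfl
end

section
/- Let Γ be a finite set of formulas and α a formula. Then α is an algebraic consequence of Γ (Γ ⊨_Alg α) if and only if Γ ⊨_BT α, i.e. for every homomorphism h from formulas into the fixed three-element HT-algebra BT with h(γ)=1 for all γ ∈ Γ, one has h(α)=1. Consequently the consequence relation is decidable. -/
/-- α is an algebraic consequence of Γ: in every algebraic model (A, h) in
which all formulas of Γ are true (h(γ) = 1), α is true (h(α) = 1). -/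
def AlgConsequence (Γ : Set Fml) (α : Fml) : Prop :=
  ∀ (A : Type) (_ : HeytingAlgebra A) (H : HTAlgebra A) (h : Fml → A),
    IsHom H h → (∀ γ ∈ Γ, h γ = ⊤) → h α = ⊤

/-- The basic three-element HT-algebra BT, carried by the three-element
chain 0 < 1 < 2 (with its linear-order Heyting implication):
S₁0 = S₁1 = 0, S₁2 = 2 and S₂0 = 0, S₂1 = S₂2 = 2. -/
noncomputable def BT : HTAlgebra (Fin 3) where
  S := fun i x => if i = 0 then (if x = 2 then 2 else 0) else (if x = 0 then 0 else 2)
  S_inf := by decide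
  S_sup := by decide
  S2_himp := by decide
  S1_himp := by decide
  S_S := by decide
  S1_sup_self := by decide
  S1_lem := by decide



section Aux

lemma fin2_eq : ∀ i : Fin 2, i = 0 ∨ i = 1 := by decide

/-- helper: the element of `Fin 3` with "levels" given by two booleans. -/
def tri (u v : Bool) : Fin 3 := if u then 2 else if v then 1 else 0

lemma tri_inf : ∀ u1 v1 u2 v2 : Bool, (u1 = true → v1 = true) → (u2 = true → v2 = true) →
    tri (u1 && u2) (v1 && v2) = tri u1 v1 ⊓ tri u2 v2 := by decide

lemma tri_sup : ∀ u1 v1 u2 v2 : Bool, (u1 = true → v1 = true) → (u2 = true → v2 = true) →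
    tri (u1 || u2) (v1 || v2) = tri u1 v1 ⊔ tri u2 v2 := by decide

lemma tri_himp : ∀ u1 v1 u2 v2 : Bool, (u1 = true → v1 = true) → (u2 = true → v2 = true) →
    tri ((!u1 || u2) && (!v1 || v2)) (!v1 || v2) = tri u1 v1 ⇨ tri u2 v2 := by decide

lemma tri_compl : ∀ u v : Bool, (u = true → v = true) →
    tri ((!u || false) && (!v || false)) (!v || false) = (tri u v)ᶜ := by decide

lemma tri_S0 : ∀ u v : Bool, (u = true → v = true) →
    tri u u = BT.S 0 (tri u v) := by decide

lemma tri_S1 : ∀ u v : Bool, (u = true → v = true) →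
    tri v v = BT.S 1 (tri u v) := by decide

lemma tri_top : tri true true = ⊤ := by decide

lemma tri_ne_top : ∀ v : Bool, tri false v ≠ ⊤ := by decide

variable {A : Type} [HeytingAlgebra A]

lemma HT_S1_le (H : HTAlgebra A) (x : A) : H.S 0 x ≤ x :=
  sup_eq_right.mp (H.S1_sup_self x)

lemma HT_S1_le_S2 (H : HTAlgebra A) (x : A) : H.S 0 x ≤ H.S 1 x := by
  have h := congrArg (H.S 1) (H.S1_sup_self x)
  rw [H.S_sup, H.S_S] at h
  exact sup_eq_right.mp h

lemma HT_S_bot (H : HTAlgebra A) (i : Fin 2) : H.S i (⊥ : A) = ⊥ := by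
  have h0 : H.S 0 (⊥ : A) = ⊥ := le_bot_iff.mp (HT_S1_le H ⊥)
  rcases fin2_eq i with rfl | rfl
  · exact h0
  · calc H.S 1 (⊥ : A) = H.S 1 (H.S 0 ⊥) := by rw [h0]
      _ = H.S 0 ⊥ := H.S_S 1 0 ⊥
      _ = ⊥ := h0

lemma HT_S_top (H : HTAlgebra A) (i : Fin 2) : H.S i (⊤ : A) = ⊤ := by
  have hb : ((⊥ : A) ⇨ ⊥) = ⊤ := himp_self
  rcases fin2_eq i with rfl | rfl
  · rw [← hb, H.S1_himp]; simp [himp_self]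
  · rw [← hb, H.S2_himp, himp_self]; exact hb.symm

lemma HT_S_codisjoint (H : HTAlgebra A) (i : Fin 2) (x : A) :
    H.S i x ⊔ (H.S i x)ᶜ = ⊤ := by
  rw [← H.S_S 0 i x]; exact H.S1_lem _

lemma himp_eq_of_boolean {x : A} (hx : x ⊔ xᶜ = ⊤) (y : A) : x ⇨ y = xᶜ ⊔ y := by
  apply le_antisymm
  · calc x ⇨ y = (x ⇨ y) ⊓ (x ⊔ xᶜ) := by rw [hx, inf_top_eq]
      _ = ((x ⇨ y) ⊓ x) ⊔ ((x ⇨ y) ⊓ xᶜ) := inf_sup_left _ _ _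
      _ ≤ y ⊔ xᶜ := sup_le_sup himp_inf_le inf_le_right
      _ = xᶜ ⊔ y := sup_comm _ _
  · rw [le_himp_iff, inf_sup_right]
    refine sup_le ?_ inf_le_left
    calc xᶜ ⊓ x ≤ ⊥ := by
          rw [inf_comm]; exact (disjoint_compl_right (a := x)).le_bot
      _ ≤ y := bot_le

/-- Key separation lemma: for any HT-algebra `A` and `a ≠ ⊤` there is a
"homomorphism" into the three-element algebra `BT` with `f a ≠ ⊤`. -/
lemma exists_BT_hom (H : HTAlgebra A) {a : A} (ha : a ≠ ⊤) :
    ∃ f : A → Fin 3,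
      (∀ x y, f (x ⊓ y) = f x ⊓ f y) ∧
      (∀ x y, f (x ⊔ y) = f x ⊔ f y) ∧
      (∀ x y, f (x ⇨ y) = f x ⇨ f y) ∧
      (∀ x, f xᶜ = (f x)ᶜ) ∧
      (∀ (i : Fin 2) x, f (H.S i x) = BT.S i (f x)) ∧
      f ⊤ = ⊤ ∧ f a ≠ ⊤ := by
  classical
  have hne : H.S 0 a ≠ ⊤ := fun h => ha (top_le_iff.mp (h ▸ HT_S1_le H a))
  obtain ⟨J, Jpr, hIJ, hdisj⟩ :=
    DistribLattice.prime_ideal_of_disjoint_filter_ideal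
      (F := Order.PFilter.principal (⊤ : A)) (I := Order.Ideal.principal (H.S 0 a))
      (by
        rw [Set.disjoint_left]
        intro x hxF hxI
        have hx1 : (⊤ : A) ≤ x := hxF
        have hx2 : x ≤ H.S 0 a := hxI
        exact hne (top_le_iff.mp (le_trans hx1 hx2)))
  -- the "trueness" predicate and its boolean version
  set P : A → Prop := fun x => x ∉ J with hPdef
  set b : Prop → Bool := fun s => decide s with hbdef
  have hb : ∀ s : Prop, b s = true ↔ s := by intro s; simp [hbdef]
  have hbfalse : ∀ s : Prop, ¬ s → b s = false := by intro s hs; simp [hbdef, hs]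
  have hbiff : ∀ s t : Prop, (s ↔ t) → b s = b t := by
    intro s t hst; simp only [hbdef]; exact decide_eq_decide.mpr hst
  have hband : ∀ s t : Prop, b (s ∧ t) = (b s && b t) := by
    intro s t; by_cases hs : s <;> by_cases ht : t <;> simp [hbdef, hs, ht]
  have hbor : ∀ s t : Prop, b (s ∨ t) = (b s || b t) := by
    intro s t; by_cases hs : s <;> by_cases ht : t <;> simp [hbdef, hs, ht]
  have hbimp : ∀ s t : Prop, b (s → t) = (!(b s) || b t) := by
    intro s t; by_cases hs : s <;> by_cases ht : t <;> simp [hbdef, hs, ht]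
  -- properties of P
  have Ptop : P ⊤ := fun hT =>
    Set.disjoint_left.mp hdisj (Order.PFilter.mem_principal.mpr le_rfl) hT
  have Pbot : ¬ P ⊥ := fun h => h J.bot_mem
  have Pmono : ∀ {x y : A}, x ≤ y → P x → P y := fun hxy hx hy => hx (J.lower hxy hy)
  have Pinf : ∀ x y : A, P (x ⊓ y) ↔ (P x ∧ P y) := by
    intro x y
    constructor
    · intro h; exact ⟨Pmono inf_le_left h, Pmono inf_le_right h⟩
    · rintro ⟨hx, hy⟩ hmem
      rcases Jpr.mem_or_mem hmem with h | h
      · exact hx h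
      · exact hy h
  have Psup : ∀ x y : A, P (x ⊔ y) ↔ (P x ∨ P y) := by
    intro x y
    constructor
    · intro h
      by_contra hc
      push_neg at hc
      exact h (Order.Ideal.sup_mem (not_not.mp hc.1) (not_not.mp hc.2))
    · rintro (hx | hy) hmem
      · exact hx (J.lower le_sup_left hmem)
      · exact hy (J.lower le_sup_right hmem)
  have PcomplB : ∀ {x : A}, (x ⊔ xᶜ = ⊤) → (P xᶜ ↔ ¬ P x) := by
    intro x hx
    constructor
    · intro hc hpx
      have hbb : P (x ⊓ xᶜ) := (Pinf _ _).2 ⟨hpx, hc⟩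
      rw [(disjoint_compl_right (a := x)).eq_bot] at hbb
      exact Pbot hbb
    · intro hnx hmem
      have hxJ : x ∈ J := not_not.mp hnx
      have hT : x ⊔ xᶜ ∈ J := Order.Ideal.sup_mem hxJ hmem
      rw [hx] at hT
      exact Ptop hT
  have Phimp : ∀ (i : Fin 2) (x : A) (y : A), P (H.S i x ⇨ y) ↔ (P (H.S i x) → P y) := by
    intro i x y
    rw [himp_eq_of_boolean (HT_S_codisjoint H i x), Psup,
      PcomplB (HT_S_codisjoint H i x)]
    tauto
  -- boolean levels
  have hmono : ∀ x : A, b (P (H.S 0 x)) = true → b (P (H.S 1 x)) = true := by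
    intro x hx
    exact (hb _).mpr (Pmono (HT_S1_le_S2 H x) ((hb _).mp hx))
  refine ⟨fun x => tri (b (P (H.S 0 x))) (b (P (H.S 1 x))), ?_, ?_, ?_, ?_, ?_, ?_, ?_⟩
  · intro x y
    have e : ∀ i : Fin 2, b (P (H.S i (x ⊓ y))) = (b (P (H.S i x)) && b (P (H.S i y))) := by
      intro i
      rw [H.S_inf, hbiff _ _ (Pinf _ _), hband]
    show tri (b (P (H.S 0 (x ⊓ y)))) (b (P (H.S 1 (x ⊓ y)))) = _
    rw [e 0, e 1]
    exact tri_inf _ _ _ _ (hmono x) (hmono y)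
  · intro x y
    have e : ∀ i : Fin 2, b (P (H.S i (x ⊔ y))) = (b (P (H.S i x)) || b (P (H.S i y))) := by
      intro i
      rw [H.S_sup, hbiff _ _ (Psup _ _), hbor]
    show tri (b (P (H.S 0 (x ⊔ y)))) (b (P (H.S 1 (x ⊔ y)))) = _
    rw [e 0, e 1]
    exact tri_sup _ _ _ _ (hmono x) (hmono y)
  · intro x y
    have e1 : b (P (H.S 1 (x ⇨ y))) = (!(b (P (H.S 1 x))) || b (P (H.S 1 y))) := by
      rw [H.S2_himp, hbiff _ _ (Phimp 1 x (H.S 1 y)), hbimp (P (H.S 1 x)) (P (H.S 1 y))]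
    have e0 : b (P (H.S 0 (x ⇨ y))) =
        ((!(b (P (H.S 0 x))) || b (P (H.S 0 y))) && (!(b (P (H.S 1 x))) || b (P (H.S 1 y)))) := by
      rw [H.S1_himp, hbiff _ _ (Pinf _ _), hband,
        hbiff _ _ (Phimp 0 x (H.S 0 y)), hbimp (P (H.S 0 x)) (P (H.S 0 y)),
        hbiff _ _ (Phimp 1 x (H.S 1 y)), hbimp (P (H.S 1 x)) (P (H.S 1 y))]
    show tri (b (P (H.S 0 (x ⇨ y)))) (b (P (H.S 1 (x ⇨ y)))) = _
    rw [e0, e1]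
    exact tri_himp _ _ _ _ (hmono x) (hmono y)
  · intro x
    have hxb : xᶜ = x ⇨ ⊥ := (himp_bot x).symm
    have e1 : b (P (H.S 1 xᶜ)) = (!(b (P (H.S 1 x))) || false) := by
      rw [hxb, H.S2_himp, HT_S_bot, hbiff _ _ (Phimp 1 x ⊥), hbimp (P (H.S 1 x)) (P ⊥), hbfalse _ Pbot]
    have e0 : b (P (H.S 0 xᶜ)) =
        ((!(b (P (H.S 0 x))) || false) && (!(b (P (H.S 1 x))) || false)) := by
      rw [hxb, H.S1_himp, HT_S_bot, HT_S_bot, hbiff _ _ (Pinf _ _), hband,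
        hbiff _ _ (Phimp 0 x ⊥), hbimp (P (H.S 0 x)) (P ⊥),
        hbiff _ _ (Phimp 1 x ⊥), hbimp (P (H.S 1 x)) (P ⊥), hbfalse _ Pbot]
    show tri (b (P (H.S 0 xᶜ))) (b (P (H.S 1 xᶜ))) = _
    rw [e0, e1]
    exact tri_compl _ _ (hmono x)
  · intro i x
    rcases fin2_eq i with rfl | rfl
    · show tri (b (P (H.S 0 (H.S 0 x)))) (b (P (H.S 1 (H.S 0 x)))) = _
      rw [H.S_S, H.S_S]
      exact tri_S0 _ _ (hmono x)
    · show tri (b (P (H.S 0 (H.S 1 x)))) (b (P (H.S 1 (H.S 1 x)))) = _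
      rw [H.S_S, H.S_S]
      exact tri_S1 _ _ (hmono x)
  · show tri (b (P (H.S 0 ⊤))) (b (P (H.S 1 ⊤))) = ⊤
    rw [HT_S_top, HT_S_top, (hb _).mpr Ptop]
    exact tri_top
  · show tri (b (P (H.S 0 a))) (b (P (H.S 1 a))) ≠ ⊤
    have : ¬ P (H.S 0 a) := fun hmem => hmem (hIJ Order.Ideal.mem_principal_self)
    rw [hbfalse _ this]
    exact tri_ne_top _

end Aux

/-- Theorem 6.1: for a finite set Γ of formulas, α is an algebraic consequence
of Γ iff Γ ⊨_BT α, i.e. every homomorphism into the finite HT-algebra BT making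
all of Γ true makes α true.  (Hence the consequence relation is decidable.) -/
theorem stmt_18 (Γ : Finset Fml) (α : Fml) :
    AlgConsequence (↑Γ) α ↔
      (∀ h : Fml → Fin 3, IsHom BT h → (∀ γ ∈ Γ, h γ = ⊤) → h α = ⊤) := by
  constructor
  · intro hAlg h hhom hΓ
    exact hAlg (Fin 3) inferInstance BT h hhom (fun γ hγ => hΓ γ (by simpa using hγ))
  · intro hBT A instA H h hhom hΓ
    letI := instA
    by_contra hα
    obtain ⟨f, finf, fsup, fhimp, fcompl, fS, ftop, fa⟩ := exists_BT_hom H hα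
    obtain ⟨h1, h2, h3, h4, h5⟩ := hhom
    have hhom' : IsHom BT (f ∘ h) :=
      ⟨fun α β => by simp [Function.comp, h1, finf],
       fun α β => by simp [Function.comp, h2, fsup],
       fun α β => by simp [Function.comp, h3, fhimp],
       fun α => by simp [Function.comp, h4, fcompl],
       fun i α => by simp [Function.comp, h5, fS]⟩
    exact fa (hBT (f ∘ h) hhom'
      (fun γ hγ => by
        have := hΓ γ (by simpa using hγ)
        simp [Function.comp, this, ftop]))
end
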